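/- Let m, M, a > 0. If (x, y) is a critical point of the amended potential V with x ≠ 0 and (x,y) not a singularity, then y = 0. Equivalently, every critical point of V off the x-axis lies on the y-axis. -/

import Mathlib

lemma aux_sqrt_deriv (K k : ℝ) (hk : 0 < k) {g : ℝ → ℝ} {g' x : ℝ}
    (hg : HasDerivAt g g' x) (h : 0 < g x) :
    HasDerivAt (fun u => K / (k * Real.sqrt (g u)))
      (-(K * g') / (2 * k * Real.sqrt (g x) * g x)) x := by
  have hs := hg.sqrt h.ne'
  have hd := hs.const_mul k
  have hsp : 0 < Real.sqrt (g x) := Real.sqrt_pos.mpr h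
  have hne : k * Real.sqrt (g x) ≠ 0 := by positivity
  have : HasDerivAt (fun u => K / (k * Real.sqrt (g u))) _ x := (hasDerivAt_const x K).div hd hne
  convert this using 1
  have hs2 : Real.sqrt (g x) ^ 2 = g x := Real.sq_sqrt h.le
  field_simp
  linear_combination (-K*g') * hs2

lemma cube_inj (p q : ℝ) (hp : 0 < p) (hq : 0 < q) (h : p^3 = q^3) : p = q := by
  rcases lt_trichotomy p q with hlt | he | hlt
  · nlinarith [mul_pos (sub_pos.mpr hlt) (mul_pos hp hp), mul_pos (sub_pos.mpr hlt) (mul_pos hq hq),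
      mul_pos (sub_pos.mpr hlt) (mul_pos hp hq)]
  · exact he
  · nlinarith [mul_pos (sub_pos.mpr hlt) (mul_pos hp hp), mul_pos (sub_pos.mpr hlt) (mul_pos hq hq),
      mul_pos (sub_pos.mpr hlt) (mul_pos hp hq)]

set_option maxHeartbeats 1000000 in
theorem stmt18 (m M a : ℝ) (hm : 0 < m) (hM : 0 < M) (ha : 0 < a)
    (x y : ℝ) (hsing0 : (x, y) ≠ (0, 0)) (hsing1 : (x, y) ≠ (a/2, 0))
    (hsing2 : (x, y) ≠ (-(a/2), 0)) (hx : x ≠ 0)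
    (hcx : deriv (fun x' : ℝ =>
      M/(2*a^3)*(x'^2+y^2) + m/(4*Real.sqrt (x'^2+y^2))
        + M/(2*Real.sqrt ((x'+a/2)^2+y^2)) + M/(2*Real.sqrt ((x'-a/2)^2+y^2))) x = 0)
    (hcy : deriv (fun y' : ℝ =>
      M/(2*a^3)*(x^2+y'^2) + m/(4*Real.sqrt (x^2+y'^2))
        + M/(2*Real.sqrt ((x+a/2)^2+y'^2)) + M/(2*Real.sqrt ((x-a/2)^2+y'^2))) y = 0) :
    y = 0 := by
  by_contra hy
  have h0 : 0 < x^2 + y^2 := by positivity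
  have h1 : 0 < (x+a/2)^2 + y^2 := by positivity
  have h2 : 0 < (x-a/2)^2 + y^2 := by positivity
  -- x-direction derivative
  have hq0x : HasDerivAt (fun u : ℝ => u^2 + y^2) (2*x) x := by
    simpa using (hasDerivAt_pow 2 x).add_const (y^2)
  have hq1x : HasDerivAt (fun u : ℝ => (u+a/2)^2 + y^2) (2*(x+a/2)) x := by
    have := (((hasDerivAt_id x).add_const (a/2)).pow 2).add_const (y^2)
    simpa using this
  have hq2x : HasDerivAt (fun u : ℝ => (u-a/2)^2 + y^2) (2*(x-a/2)) x := by
    have := (((hasDerivAt_id x).sub_const (a/2)).pow 2).add_const (y^2)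
    simpa using this
  have t1x := hq0x.const_mul (M/(2*a^3))
  have t2x := aux_sqrt_deriv m 4 (by norm_num) hq0x h0
  have t3x := aux_sqrt_deriv M 2 (by norm_num) hq1x h1
  have t4x := aux_sqrt_deriv M 2 (by norm_num) hq2x h2
  have hXd := (((t1x.add t2x).add t3x).add t4x).deriv
  have hcx' : M/(2*a^3)*(2*x) + -(m*(2*x)) / (2*4*Real.sqrt (x^2+y^2)*(x^2+y^2))
      + -(M*(2*(x+a/2))) / (2*2*Real.sqrt ((x+a/2)^2+y^2)*((x+a/2)^2+y^2))
      + -(M*(2*(x-a/2))) / (2*2*Real.sqrt ((x-a/2)^2+y^2)*((x-a/2)^2+y^2)) = 0 := by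
    rw [← hXd]; exact hcx
  -- y-direction derivative
  have hq0y : HasDerivAt (fun v : ℝ => x^2 + v^2) (2*y) y := by
    simpa using (hasDerivAt_pow 2 y).const_add (x^2)
  have hq1y : HasDerivAt (fun v : ℝ => (x+a/2)^2 + v^2) (2*y) y := by
    simpa using (hasDerivAt_pow 2 y).const_add ((x+a/2)^2)
  have hq2y : HasDerivAt (fun v : ℝ => (x-a/2)^2 + v^2) (2*y) y := by
    simpa using (hasDerivAt_pow 2 y).const_add ((x-a/2)^2)
  have t1y := hq0y.const_mul (M/(2*a^3))
  have t2y := aux_sqrt_deriv m 4 (by norm_num) hq0y h0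
  have t3y := aux_sqrt_deriv M 2 (by norm_num) hq1y h1
  have t4y := aux_sqrt_deriv M 2 (by norm_num) hq2y h2
  have hYd := (((t1y.add t2y).add t3y).add t4y).deriv
  have hcy' : M/(2*a^3)*(2*y) + -(m*(2*y)) / (2*4*Real.sqrt (x^2+y^2)*(x^2+y^2))
      + -(M*(2*y)) / (2*2*Real.sqrt ((x+a/2)^2+y^2)*((x+a/2)^2+y^2))
      + -(M*(2*y)) / (2*2*Real.sqrt ((x-a/2)^2+y^2)*((x-a/2)^2+y^2)) = 0 := by
    rw [← hYd]; exact hcy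
  -- abbreviations
  set Q0 := x^2 + y^2 with hQ0
  set Q1 := (x+a/2)^2 + y^2 with hQ1
  set Q2 := (x-a/2)^2 + y^2 with hQ2
  set S0 := Real.sqrt Q0 with hS0
  set S1 := Real.sqrt Q1 with hS1
  set S2 := Real.sqrt Q2 with hS2
  have hS0p : 0 < S0 := Real.sqrt_pos.mpr h0
  have hS1p : 0 < S1 := Real.sqrt_pos.mpr h1
  have hS2p : 0 < S2 := Real.sqrt_pos.mpr h2
  have hS1sq : S1^2 = Q1 := Real.sq_sqrt h1.le
  have hS2sq : S2^2 = Q2 := Real.sq_sqrt h2.le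
  have hS0ne := hS0p.ne'
  have hS1ne := hS1p.ne'
  have hS2ne := hS2p.ne'
  have haa := ha.ne'
  -- the bracket B
  set B := M/a^3 - m/(4*(S0*Q0)) - M/(2*(S1*Q1)) - M/(2*(S2*Q2)) with hBdef
  have hyB : y * B = 0 := by
    rw [← hcy', hBdef]
    field_simp
    ring
  have hB : B = 0 := (mul_eq_zero.mp hyB).resolve_left hy
  have hxE : x * B + (M*a/(4*(S2*Q2)) - M*a/(4*(S1*Q1))) = 0 := by
    rw [← hcx', hBdef]
    field_simp
    ring
  rw [hB, mul_zero, zero_add, sub_eq_zero] at hxE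
  have h12 : S1 * Q1 = S2 * Q2 := by
    rw [div_eq_div_iff (by positivity) (by positivity)] at hxE
    have hMa : (M*a*4 : ℝ) ≠ 0 := by positivity
    exact mul_left_cancel₀ hMa (by linear_combination hxE)
  have hcube : Q1^3 = Q2^3 := by
    linear_combination (S1*Q1 + S2*Q2) * h12 - Q1^2 * hS1sq + Q2^2 * hS2sq
  have hq12 : Q1 = Q2 := cube_inj _ _ h1 h2 hcube
  apply hx
  have hxa : x * a = 0 := by
    rw [hQ1, hQ2] at hq12
    linear_combination hq12 / 2
  rcases mul_eq_zero.mp hxa with h | h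
  · exact h
  · exact absurd h haa
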